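/- Let G be a connected graph with maximum degree 3 and n vertices, and let G' be the graph from the APX-reduction (as in Theorem 8 of the paper). If V_c is a vertex cover of G of size k, then {v_i^1, v_i^2 : v_i ∈ V_c} ∪ {w_i, y_i : i ∈ [n]} is a semipaired dominating set of G' of size 2k + 2n. -/

import Mathlib

open SimpleGraph Finset

/-- `D` is a dominating set of `G`. -/
def Dominating {V : Type*} (G : SimpleGraph V) (D : Finset V) : Prop :=
  ∀ v : V, ∃ u ∈ D, u = v ∨ G.Adj u v

/-- `D` is a semipaired dominating set of `G`: a dominating set whose vertices can be
partitioned into pairs (via a fixed-point-free involution) at distance at most 2. -/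
def SemiPairedDom {V : Type*} (G : SimpleGraph V) (D : Finset V) : Prop :=
  Dominating G D ∧ ∃ f : V → V,
    (∀ u ∈ D, f u ∈ D) ∧ (∀ u ∈ D, f (f u) = u) ∧ (∀ u ∈ D, f u ≠ u) ∧
    (∀ u ∈ D, G.Adj u (f u) ∨ ∃ w, G.Adj u w ∧ G.Adj w (f u))

/-- `D` is a paired dominating set of `G`: a dominating set whose induced subgraph has a
perfect matching (encoded by a fixed-point-free involution pairing adjacent vertices). -/
def PairedDom {V : Type*} (G : SimpleGraph V) (D : Finset V) : Prop :=
  Dominating G D ∧ ∃ f : V → V,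
    (∀ u ∈ D, f u ∈ D) ∧ (∀ u ∈ D, f (f u) = u) ∧ (∀ u ∈ D, f u ≠ u) ∧
    (∀ u ∈ D, G.Adj u (f u))

/-- The domination number. -/
noncomputable def domNum (V : Type*) [Fintype V] (G : SimpleGraph V) : ℕ :=
  sInf {k : ℕ | ∃ D : Finset V, Dominating G D ∧ D.card = k}

/-- The semipaired domination number. -/
noncomputable def semiPairedDomNum (V : Type*) [Fintype V] (G : SimpleGraph V) : ℕ :=
  sInf {k : ℕ | ∃ D : Finset V, SemiPairedDom G D ∧ D.card = k}

/-- The paired domination number. -/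
noncomputable def pairedDomNum (V : Type*) [Fintype V] (G : SimpleGraph V) : ℕ :=
  sInf {k : ℕ | ∃ D : Finset V, PairedDom G D ∧ D.card = k}

/-- A vertex cover of `G`. -/
def IsVertexCover {α : Type*} (G : SimpleGraph α) (C : Finset α) : Prop :=
  ∀ u v : α, G.Adj u v → u ∈ C ∨ v ∈ C

/-- The graph `G'` of the APX-reduction: two copies of the incidence structure of `G`
(vertices `Sum.inl (Sum.inl (i, l))` are `v_i^{l+1}` and `Sum.inl (Sum.inr (e, l))` are
`e^{l+1}`), together with gadget paths `w_i – x_i – y_i – z_i`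
(the vertices `Sum.inr (i, 0), …, Sum.inr (i, 3)`) attached via `w_i` to both
`v_i^1` and `v_i^2`. -/
def apxG {α : Type*} (G : SimpleGraph α) :
    SimpleGraph ((α × Fin 2 ⊕ ↥G.edgeSet × Fin 2) ⊕ α × Fin 4) :=
  SimpleGraph.fromRel (fun u v =>
    (∃ (i : α) (l : Fin 2) (e : G.edgeSet), u = Sum.inl (Sum.inl (i, l)) ∧
      v = Sum.inl (Sum.inr (e, l)) ∧ i ∈ (e : Sym2 α)) ∨
    (∃ (i : α) (l : Fin 2), u = Sum.inl (Sum.inl (i, l)) ∧ v = Sum.inr (i, 0)) ∨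
    (∃ (i : α) (j k : Fin 4), u = Sum.inr (i, j) ∧ v = Sum.inr (i, k) ∧
      (k : ℕ) = (j : ℕ) + 1))

lemma apxG_adj_vw {α : Type*} (G : SimpleGraph α) (i : α) (l : Fin 2) :
    (apxG G).Adj (Sum.inl (Sum.inl (i, l))) (Sum.inr (i, 0)) := by
  rw [apxG, SimpleGraph.fromRel_adj]
  exact ⟨by simp, Or.inl (Or.inr (Or.inl ⟨i, l, rfl, rfl⟩))⟩

lemma apxG_adj_ve {α : Type*} (G : SimpleGraph α) (i : α) (l : Fin 2) (e : G.edgeSet)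
    (h : i ∈ (e : Sym2 α)) :
    (apxG G).Adj (Sum.inl (Sum.inl (i, l))) (Sum.inl (Sum.inr (e, l))) := by
  rw [apxG, SimpleGraph.fromRel_adj]
  exact ⟨by simp, Or.inl (Or.inl ⟨i, l, e, rfl, rfl, h⟩)⟩

lemma apxG_adj_path {α : Type*} (G : SimpleGraph α) (i : α) (j k : Fin 4)
    (h : (k : ℕ) = (j : ℕ) + 1) :
    (apxG G).Adj (Sum.inr (i, j)) (Sum.inr (i, k)) := by
  rw [apxG, SimpleGraph.fromRel_adj]
  refine ⟨by simp [Prod.ext_iff]; omega, Or.inl (Or.inr (Or.inr ⟨i, j, k, rfl, rfl, h⟩))⟩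

/-- If `C` is a vertex cover of a connected graph `G` with maximum degree
`3` and `n` vertices, then `{v_i^1, v_i^2 : v_i ∈ C} ∪ {w_i, y_i : i ∈ [n]}` is a
semipaired dominating set of the APX-reduction graph `G'` of size `2|C| + 2n`. -/
theorem apxG_semiPairedDom_of_vertexCover {α : Type*} [Fintype α] [DecidableEq α]
    (G : SimpleGraph α) [DecidableRel G.Adj]
    (hconn : G.Connected) (hdeg : ∀ v : α, G.degree v ≤ 3)
    (C : Finset α) (hC : _root_.IsVertexCover G C) :
    SemiPairedDom (apxG G)
      ((C.image fun i => (Sum.inl (Sum.inl (i, 0)) :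
          (α × Fin 2 ⊕ ↥G.edgeSet × Fin 2) ⊕ α × Fin 4)) ∪
        (C.image fun i => (Sum.inl (Sum.inl (i, 1)) :
          (α × Fin 2 ⊕ ↥G.edgeSet × Fin 2) ⊕ α × Fin 4)) ∪
        (Finset.univ.image fun i : α => (Sum.inr (i, 0) :
          (α × Fin 2 ⊕ ↥G.edgeSet × Fin 2) ⊕ α × Fin 4)) ∪
        (Finset.univ.image fun i : α => (Sum.inr (i, 2) :
          (α × Fin 2 ⊕ ↥G.edgeSet × Fin 2) ⊕ α × Fin 4))) ∧
    ((C.image fun i => (Sum.inl (Sum.inl (i, 0)) :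
          (α × Fin 2 ⊕ ↥G.edgeSet × Fin 2) ⊕ α × Fin 4)) ∪
        (C.image fun i => (Sum.inl (Sum.inl (i, 1)) :
          (α × Fin 2 ⊕ ↥G.edgeSet × Fin 2) ⊕ α × Fin 4)) ∪
        (Finset.univ.image fun i : α => (Sum.inr (i, 0) :
          (α × Fin 2 ⊕ ↥G.edgeSet × Fin 2) ⊕ α × Fin 4)) ∪
        (Finset.univ.image fun i : α => (Sum.inr (i, 2) :
          (α × Fin 2 ⊕ ↥G.edgeSet × Fin 2) ⊕ α × Fin 4))).card
      = 2 * C.card + 2 * Fintype.card α := by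
  constructor
  · constructor
    · rintro ((⟨i, l⟩ | ⟨e, l⟩) | ⟨i, j⟩)
      · exact ⟨Sum.inr (i, 0), by simp, Or.inr ((apxG_adj_vw G i l).symm)⟩
      · obtain ⟨s, hs⟩ := e
        induction s using Sym2.ind with
        | _ a b =>
          rcases hC a b (G.mem_edgeSet.mp hs) with h | h
          · refine ⟨Sum.inl (Sum.inl (a, l)), ?_, Or.inr (apxG_adj_ve G a l ⟨_, hs⟩ (by simp))⟩
            fin_cases l <;> simp [h]
          · refine ⟨Sum.inl (Sum.inl (b, l)), ?_, Or.inr (apxG_adj_ve G b l ⟨_, hs⟩ (by simp))⟩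
            fin_cases l <;> simp [h]
      · fin_cases j
        · exact ⟨Sum.inr (i, 0), by simp, Or.inl rfl⟩
        · exact ⟨Sum.inr (i, 0), by simp, Or.inr (apxG_adj_path G i 0 1 rfl)⟩
        · exact ⟨Sum.inr (i, 2), by simp, Or.inl rfl⟩
        · exact ⟨Sum.inr (i, 2), by simp, Or.inr (apxG_adj_path G i 2 3 rfl)⟩
    · refine ⟨fun u => match u with
        | Sum.inl (Sum.inl (i, l)) => Sum.inl (Sum.inl (i, l + 1))
        | Sum.inl (Sum.inr p) => Sum.inl (Sum.inr p)
        | Sum.inr (i, j) => Sum.inr (i, j + 2), ?_, ?_, ?_, ?_⟩ <;>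
      · intro u hu
        simp only [mem_union, mem_image, mem_univ, true_and] at hu
        rcases hu with ((⟨i, hi, rfl⟩ | ⟨i, hi, rfl⟩) | ⟨i, rfl⟩) | ⟨i, rfl⟩ <;>
          simp_all <;>
          first
          | exact Or.inr (Or.inr ⟨i, 0, apxG_adj_vw G i _, (apxG_adj_vw G i _).symm⟩)
          | exact Or.inr (Or.inr ⟨i, 1, apxG_adj_path G i 0 1 rfl, apxG_adj_path G i 1 2 rfl⟩)
          | exact Or.inr (Or.inr ⟨i, 1, (apxG_adj_path G i 1 2 rfl).symm,
              (apxG_adj_path G i 0 1 rfl).symm⟩)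
  · rw [card_union_of_disjoint, card_union_of_disjoint, card_union_of_disjoint,
      card_image_of_injective _ (fun a b h => by simpa using h),
      card_image_of_injective _ (fun a b h => by simpa using h),
      card_image_of_injective _ (fun a b h => by simpa using h),
      card_image_of_injective _ (fun a b h => by simpa using h), card_univ]
    · ring
    · simp [Finset.disjoint_left]
    · simp [Finset.disjoint_left]
    · simp [Finset.disjoint_left]
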